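/- Elliptical potential lemma (sliding-window version): for actions A_1,…,A_T ∈ ℝ^d with ‖A_t‖₂ ≤ L, and V_{t-1} = Σ_{s=max(1,t-τ)}^{t-1} A_s A_s^⊤ + (λ/c_μ) I_d, it holds that Σ_{t=1}^T min{1, ‖A_t‖²_{V_{t-1}^{-1}}} ≤ 2 d ⌈T/τ⌉ log(1 + c_μ L² τ/(λ d)). -/

import Mathlib

open Real Matrix

section EllipticalHelpers

variable {d : ℕ}

-- L1
lemma min_one_le_two_log {x : ℝ} (hx : 0 ≤ x) : min 1 x ≤ 2 * Real.log (1 + x) := by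
  rcases le_total x 1 with h | h
  · rw [min_eq_right h]
    have h1 : (0:ℝ) < 1 + x := by linarith
    have := Real.log_le_sub_one_of_pos (x := (1+x)⁻¹) (by positivity)
    rw [Real.log_inv] at this
    have hlog : x / (1 + x) ≤ Real.log (1 + x) := by
      have : (1:ℝ) - (1+x)⁻¹ = x / (1+x) := by field_simp; ring
      linarith [this ▸ (by linarith : (1:ℝ) - (1+x)⁻¹ ≤ Real.log (1+x))]
    have : x / 2 ≤ x / (1 + x) := by
      apply div_le_div_of_nonneg_left hx (by linarith) (by linarith)
    linarith
  · rw [min_eq_left h]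
    have : Real.log 2 ≤ Real.log (1 + x) := Real.log_le_log (by norm_num) (by linarith)
    have h2 := Real.log_two_gt_d9
    linarith

lemma dot_sym {M : Matrix (Fin d) (Fin d) ℝ} (hM : M.IsHermitian) (u v : Fin d → ℝ) :
    u ⬝ᵥ M *ᵥ v = (M *ᵥ u) ⬝ᵥ v := by
  rw [dotProduct_mulVec, ← mulVec_transpose]
  congr 1
  rw [← conjTranspose_eq_transpose_of_trivial, hM]

lemma psd_nonneg {M : Matrix (Fin d) (Fin d) ℝ} (hM : M.PosSemidef) (x : Fin d → ℝ) :
    0 ≤ x ⬝ᵥ M *ᵥ x := by simpa using hM.dotProduct_mulVec_nonneg x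

lemma psd_vecMulVec (a : Fin d → ℝ) : (vecMulVec a a).PosSemidef := by
  refine Matrix.PosSemidef.of_dotProduct_mulVec_nonneg ?_ ?_
  · ext i j
    simp [vecMulVec_apply, conjTranspose_apply, mul_comm]
  · intro x
    have : star x ⬝ᵥ (vecMulVec a a) *ᵥ x = (a ⬝ᵥ x) * (a ⬝ᵥ x) := by
      simp [vecMulVec_apply, dotProduct, mulVec, Finset.mul_sum, Finset.sum_mul]
      apply Finset.sum_congr rfl; intro i _
      apply Finset.sum_congr rfl; intro j _
      ring
    rw [this]
    exact mul_self_nonneg _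

lemma psd_sum {s : Finset ℕ} (f : ℕ → Matrix (Fin d) (Fin d) ℝ)
    (hf : ∀ i ∈ s, (f i).PosSemidef) : (∑ i ∈ s, f i).PosSemidef := by
  classical
  induction s using Finset.induction_on with
  | empty => simpa using Matrix.PosSemidef.zero
  | insert _ _ h ih =>
    rw [Finset.sum_insert h]
    exact (hf _ (Finset.mem_insert_self _ _)).add
      (ih fun i hi => hf i (Finset.mem_insert_of_mem hi))

lemma inv_quad_mono {W V : Matrix (Fin d) (Fin d) ℝ} (hW : W.PosDef)
    (hVW : (V - W).PosSemidef) (x : Fin d → ℝ) :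
    x ⬝ᵥ V⁻¹ *ᵥ x ≤ x ⬝ᵥ W⁻¹ *ᵥ x := by
  have hV : V.PosDef := by
    have := hW.add_posSemidef hVW
    rwa [add_sub_cancel] at this
  set y := V⁻¹ *ᵥ x with hy
  have hVy : V *ᵥ y = x := by
    rw [hy, mulVec_mulVec, Matrix.mul_nonsing_inv _ hV.det_pos.ne'.isUnit, one_mulVec]
  set w := W⁻¹ *ᵥ x with hw
  have hWw : W *ᵥ w = x := by
    rw [hw, mulVec_mulVec, Matrix.mul_nonsing_inv _ hW.det_pos.ne'.isUnit, one_mulVec]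
  -- 0 ≤ (y-w) ⬝ᵥ W (y-w)
  have h1 : 0 ≤ (y - w) ⬝ᵥ W *ᵥ (y - w) := psd_nonneg hW.posSemidef _
  have hexp : (y - w) ⬝ᵥ W *ᵥ (y - w)
      = y ⬝ᵥ W *ᵥ y - y ⬝ᵥ x - x ⬝ᵥ y + w ⬝ᵥ x := by
    rw [mulVec_sub, hWw, sub_dotProduct, dotProduct_sub, dotProduct_sub]
    have : w ⬝ᵥ W *ᵥ y = x ⬝ᵥ y := by rw [dot_sym hW.isHermitian, hWw]
    rw [this]
    ring
  have h2 : 0 ≤ y ⬝ᵥ (V - W) *ᵥ y := psd_nonneg hVW _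
  have h2' : y ⬝ᵥ W *ᵥ y ≤ y ⬝ᵥ V *ᵥ y := by
    rw [sub_mulVec, dotProduct_sub] at h2; linarith
  have hyVy : y ⬝ᵥ V *ᵥ y = y ⬝ᵥ x := by rw [hVy]
  have hxy : x ⬝ᵥ V⁻¹ *ᵥ x = x ⬝ᵥ y := rfl
  have hcomm : x ⬝ᵥ y = y ⬝ᵥ x := dotProduct_comm _ _
  have hxw : x ⬝ᵥ W⁻¹ *ᵥ x = x ⬝ᵥ w := rfl
  have hcomm2 : x ⬝ᵥ w = w ⬝ᵥ x := dotProduct_comm _ _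
  linarith

lemma det_rank_one {W : Matrix (Fin d) (Fin d) ℝ} (hW : W.PosDef) (a : Fin d → ℝ) :
    (W + vecMulVec a a).det = W.det * (1 + a ⬝ᵥ W⁻¹ *ᵥ a) := by
  have key : W + vecMulVec a a = W * (1 + replicateCol (Fin 1) (W⁻¹ *ᵥ a) * replicateRow (Fin 1) a) := by
    rw [Matrix.mul_add, Matrix.mul_one, ← Matrix.mul_assoc, ← Matrix.replicateCol_mulVec,
      Matrix.mulVec_mulVec, Matrix.mul_nonsing_inv _ hW.det_pos.ne'.isUnit, Matrix.one_mulVec,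
      vecMulVec_eq (Fin 1)]
    rfl
  rw [key, Matrix.det_mul]
  erw [Matrix.det_one_add_replicateCol_mul_replicateRow]

lemma trace_vecMulVec (a : Fin d → ℝ) : (vecMulVec a a).trace = a ⬝ᵥ a := by
  simp [Matrix.trace, Matrix.diag, vecMulVec_apply, dotProduct]

lemma trace_eq_sum_eig {M : Matrix (Fin d) (Fin d) ℝ} (hM : M.IsHermitian) :
    M.trace = ∑ i, hM.eigenvalues i := by
  simpa using hM.trace_eq_sum_eigenvalues

lemma log_det_le_trace (hd : 0 < d) {M : Matrix (Fin d) (Fin d) ℝ} (hM : M.PosDef) :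
    Real.log M.det ≤ d * Real.log (M.trace / d) := by
  have hev := hM.eigenvalues_pos
  have hdet : M.det = ∏ i, hM.isHermitian.eigenvalues i := by
    rw [hM.isHermitian.det_eq_prod_eigenvalues]; norm_num
  have htr : M.trace = ∑ i, hM.isHermitian.eigenvalues i := trace_eq_sum_eig hM.isHermitian
  rw [hdet, Real.log_prod fun i _ => (hev i).ne']
  have jensen := (strictConcaveOn_log_Ioi.concaveOn).le_map_sum
    (t := Finset.univ) (w := fun _ : Fin d => (d : ℝ)⁻¹) (p := fun i => hM.isHermitian.eigenvalues i)
    (fun i _ => by positivity)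
    (by simp [Finset.card_univ]; field_simp)
    (fun i _ => Set.mem_Ioi.mpr (hev i))
  simp only [smul_eq_mul] at jensen
  have h1 : ∑ i, ((d:ℝ))⁻¹ * Real.log (hM.isHermitian.eigenvalues i)
      = (d:ℝ)⁻¹ * ∑ i, Real.log (hM.isHermitian.eigenvalues i) := by
    rw [Finset.mul_sum]
  have h2 : ∑ i, ((d:ℝ))⁻¹ * hM.isHermitian.eigenvalues i
      = M.trace / d := by
    rw [htr, Finset.sum_div]
    apply Finset.sum_congr rfl; intro i _
    rw [div_eq_inv_mul]
  rw [h1, h2] at jensen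
  have hd' : (0:ℝ) < d := by exact_mod_cast hd
  calc ∑ i, Real.log (hM.isHermitian.eigenvalues i)
      = d * ((d:ℝ)⁻¹ * ∑ i, Real.log (hM.isHermitian.eigenvalues i)) := by
        field_simp
    _ ≤ d * Real.log (M.trace / d) := by
        apply mul_le_mul_of_nonneg_left jensen hd'.le

lemma Qpd {lam cμ : ℝ} (hlam : 0 < lam) (hcμ : 0 < cμ) :
    ((lam / cμ) • (1 : Matrix (Fin d) (Fin d) ℝ)).PosDef := by
  rw [Matrix.smul_one_eq_diagonal]
  rw [Matrix.posDef_diagonal_iff]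
  intro i; positivity

lemma block_bound (d τ : ℕ) (hd : 0 < d) (hτ : 1 ≤ τ) (A : ℕ → (Fin d → ℝ))
    (lam cμ L : ℝ) (hlam : 0 < lam) (hcμ : 0 < cμ) (hL : 0 < L)
    (hA : ∀ t, Real.sqrt (A t ⬝ᵥ A t) ≤ L)
    (V : ℕ → Matrix (Fin d) (Fin d) ℝ)
    (hV : ∀ u, V u = (∑ s ∈ Finset.Icc (max 1 (u + 1 - τ)) u, vecMulVec (A s) (A s))
      + (lam / cμ) • (1 : Matrix (Fin d) (Fin d) ℝ))
    (b : ℕ) (hb : 1 ≤ b) :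
    ∑ i ∈ Finset.range τ, min 1 (A (b+i) ⬝ᵥ (V (b+i-1))⁻¹.mulVec (A (b+i)))
      ≤ 2 * d * Real.log (1 + cμ * L^2 * τ / (lam * d)) := by
  have hd' : (0:ℝ) < d := by exact_mod_cast hd
  set Q : Matrix (Fin d) (Fin d) ℝ := (lam / cμ) • 1 with hQdef
  have hQ : Q.PosDef := Qpd hlam hcμ
  -- A bounds
  have hAnn : ∀ t, 0 ≤ A t ⬝ᵥ A t := fun t =>
    Finset.sum_nonneg fun i _ => mul_self_nonneg _
  have hAL : ∀ t, A t ⬝ᵥ A t ≤ L^2 := by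
    intro t
    nlinarith [hA t, Real.sq_sqrt (hAnn t), Real.sqrt_nonneg (A t ⬝ᵥ A t)]
  -- the within-block matrices
  set W : ℕ → Matrix (Fin d) (Fin d) ℝ :=
    fun i => (∑ s ∈ Finset.Ico b (b+i), vecMulVec (A s) (A s)) + Q with hWdef
  have hW0 : W 0 = Q := by simp [hWdef]
  have hWpd : ∀ i, (W i).PosDef :=
    fun i => Matrix.PosDef.posSemidef_add (psd_sum _ fun s _ => psd_vecMulVec (A s)) hQ
  have hWsucc : ∀ i, W (i+1) = W i + vecMulVec (A (b+i)) (A (b+i)) := by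
    intro i
    simp only [hWdef]
    rw [show b + (i+1) = (b+i) + 1 from rfl, Finset.sum_Ico_succ_top (by omega : b ≤ b+i)]
    rw [add_right_comm]
  set q : ℕ → ℝ := fun i => A (b+i) ⬝ᵥ (W i)⁻¹ *ᵥ A (b+i) with hqdef
  have hqnn : ∀ i, 0 ≤ q i := fun i => psd_nonneg (hWpd i).inv.posSemidef _
  have hdet : ∀ i, Real.log (1 + q i)
      = Real.log (W (i+1)).det - Real.log (W i).det := by
    intro i
    rw [hWsucc i, det_rank_one (hWpd i)]
    rw [Real.log_mul (hWpd i).det_pos.ne' (by have := hqnn i; positivity)]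
    ring
  -- relation to V
  have hVrel : ∀ i < τ, ((V (b+i-1)) - W i).PosSemidef := by
    intro i hiτ
    have hIcc : Finset.Icc (max 1 (b+i-1+1-τ)) (b+i-1)
        = Finset.Ico (max 1 (b+i-τ)) (b+i) := by
      apply Finset.ext; intro s
      simp only [Finset.mem_Icc, Finset.mem_Ico]
      omega
    have hsub : Finset.Ico b (b+i) ⊆ Finset.Ico (max 1 (b+i-τ)) (b+i) := by
      apply Finset.Ico_subset_Ico _ le_rfl
      omega
    have hVsplit : V (b+i-1) = W i +
        ∑ s ∈ Finset.Ico (max 1 (b+i-τ)) (b+i) \ Finset.Ico b (b+i),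
          vecMulVec (A s) (A s) := by
      rw [hV (b+i-1), hIcc, ← Finset.sum_sdiff hsub, hWdef]
      abel
    rw [hVsplit, add_sub_cancel_left]
    exact psd_sum _ fun s _ => psd_vecMulVec (A s)
  have hVpd : ∀ i < τ, (V (b+i-1)).PosDef := by
    intro i hiτ
    have h := (hWpd i).add_posSemidef (hVrel i hiτ)
    rwa [add_sub_cancel] at h
  -- step 1 : pointwise bound
  have step1 : ∀ i ∈ Finset.range τ,
      min 1 (A (b+i) ⬝ᵥ (V (b+i-1))⁻¹.mulVec (A (b+i)))
        ≤ 2 * Real.log (1 + q i) := by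
    intro i hi
    rw [Finset.mem_range] at hi
    have hx : 0 ≤ A (b+i) ⬝ᵥ (V (b+i-1))⁻¹ *ᵥ A (b+i) :=
      psd_nonneg (hVpd i hi).inv.posSemidef _
    have hle : A (b+i) ⬝ᵥ (V (b+i-1))⁻¹ *ᵥ A (b+i) ≤ q i :=
      inv_quad_mono (hWpd i) (hVrel i hi) _
    calc min 1 (A (b+i) ⬝ᵥ (V (b+i-1))⁻¹ *ᵥ A (b+i))
        ≤ 2 * Real.log (1 + A (b+i) ⬝ᵥ (V (b+i-1))⁻¹ *ᵥ A (b+i)) := min_one_le_two_log hx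
      _ ≤ 2 * Real.log (1 + q i) := by
          have := Real.log_le_log (by linarith) (by linarith : 1 + A (b+i) ⬝ᵥ (V (b+i-1))⁻¹ *ᵥ A (b+i) ≤ 1 + q i)
          linarith
  -- telescope
  have tele : ∑ i ∈ Finset.range τ, 2 * Real.log (1 + q i)
      = 2 * (Real.log (W τ).det - Real.log (W 0).det) := by
    rw [← Finset.mul_sum]
    congr 1
    calc ∑ i ∈ Finset.range τ, Real.log (1 + q i)
        = ∑ i ∈ Finset.range τ, (Real.log (W (i+1)).det - Real.log (W i).det) := by
          exact Finset.sum_congr rfl fun i _ => hdet i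
      _ = Real.log (W τ).det - Real.log (W 0).det :=
          Finset.sum_range_sub (fun i => Real.log (W i).det) τ
  -- trace bound
  have htrace : (W τ).trace ≤ lam / cμ * d + τ * L^2 := by
    have : (W τ).trace = (∑ s ∈ Finset.Ico b (b+τ), (A s ⬝ᵥ A s)) + lam / cμ * d := by
      simp only [hWdef, Matrix.trace_add, Matrix.trace_sum, trace_vecMulVec, hQdef,
        Matrix.trace_smul, Matrix.trace_one, smul_eq_mul]
      simp
    rw [this]
    have hsum : ∑ s ∈ Finset.Ico b (b+τ), (A s ⬝ᵥ A s) ≤ τ * L^2 := by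
      calc ∑ s ∈ Finset.Ico b (b+τ), (A s ⬝ᵥ A s) ≤ ∑ s ∈ Finset.Ico b (b+τ), L^2 :=
            Finset.sum_le_sum fun s _ => hAL s
        _ = τ * L^2 := by rw [Finset.sum_const, Nat.card_Ico]; simp
    linarith
  have htrlb : lam / cμ * d ≤ (W τ).trace := by
    have : (W τ).trace = (∑ s ∈ Finset.Ico b (b+τ), (A s ⬝ᵥ A s)) + lam / cμ * d := by
      simp only [hWdef, Matrix.trace_add, Matrix.trace_sum, trace_vecMulVec, hQdef,
        Matrix.trace_smul, Matrix.trace_one, smul_eq_mul]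
      simp
    rw [this]
    have : 0 ≤ ∑ s ∈ Finset.Ico b (b+τ), (A s ⬝ᵥ A s) :=
      Finset.sum_nonneg fun s _ => hAnn s
    linarith
  -- log det bounds
  have hlogQ : Real.log (W 0).det = d * Real.log (lam / cμ) := by
    rw [hW0, hQdef, Matrix.det_smul, Matrix.det_one, mul_one, Real.log_pow]
    simp
  have hB : (0:ℝ) < lam / cμ := by positivity
  have hlogWτ : Real.log (W τ).det ≤ d * Real.log (lam / cμ + τ * L^2 / d) := by
    calc Real.log (W τ).det ≤ d * Real.log ((W τ).trace / d) := log_det_le_trace hd (hWpd τ)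
      _ ≤ d * Real.log (lam / cμ + τ * L^2 / d) := by
          apply mul_le_mul_of_nonneg_left _ hd'.le
          apply Real.log_le_log (div_pos (lt_of_lt_of_le (by positivity) htrlb) hd')
          rw [div_le_iff₀ hd']
          calc (W τ).trace ≤ lam / cμ * d + τ * L^2 := htrace
            _ = (lam / cμ + τ * L^2 / d) * d := by field_simp
  -- final arithmetic
  have hratio : Real.log (lam / cμ + τ * L^2 / d) - Real.log (lam / cμ)
      = Real.log (1 + cμ * L^2 * τ / (lam * d)) := by
    rw [← Real.log_div (by positivity) hB.ne']
    congr 1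
    field_simp
  calc ∑ i ∈ Finset.range τ, min 1 (A (b+i) ⬝ᵥ (V (b+i-1))⁻¹.mulVec (A (b+i)))
      ≤ ∑ i ∈ Finset.range τ, 2 * Real.log (1 + q i) := Finset.sum_le_sum step1
    _ = 2 * (Real.log (W τ).det - Real.log (W 0).det) := tele
    _ ≤ 2 * (d * Real.log (lam / cμ + τ * L^2 / d) - d * Real.log (lam / cμ)) := by
        rw [hlogQ]; linarith
    _ = 2 * d * Real.log (1 + cμ * L^2 * τ / (lam * d)) := by
        rw [← hratio]; ring

end EllipticalHelpers

/-- Elliptical potential lemma, sliding-window version. -/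
theorem elliptical_potential_sliding_window
    (d T τ : ℕ) (hd : 0 < d) (hτ : 1 ≤ τ) (A : ℕ → (Fin d → ℝ))
    (lam cμ L : ℝ) (hlam : 0 < lam) (hcμ : 0 < cμ) (hL : 0 < L)
    (hA : ∀ t, Real.sqrt (A t ⬝ᵥ A t) ≤ L)
    (V : ℕ → Matrix (Fin d) (Fin d) ℝ)
    (hV : ∀ u, V u = (∑ s ∈ Finset.Icc (max 1 (u + 1 - τ)) u, vecMulVec (A s) (A s))
      + (lam / cμ) • (1 : Matrix (Fin d) (Fin d) ℝ)) :
    ∑ t ∈ Finset.Icc 1 T, min 1 (A t ⬝ᵥ (V (t - 1))⁻¹.mulVec (A t))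
      ≤ 2 * d * (⌈(T : ℝ) / (τ : ℝ)⌉₊ : ℝ)
        * Real.log (1 + cμ * L ^ 2 * τ / (lam * d)) := by
  classical
  set n := ⌈(T : ℝ) / (τ : ℝ)⌉₊ with hn
  have hτ' : (0:ℝ) < τ := by exact_mod_cast hτ
  set f : ℕ → ℝ := fun t => min 1 (A t ⬝ᵥ (V (t - 1))⁻¹.mulVec (A t)) with hf
  have hnn : ∀ t, 0 ≤ f t := by
    intro t
    have hVpd : (V (t-1)).PosDef := by
      rw [hV (t-1)]
      exact Matrix.PosDef.posSemidef_add (psd_sum _ fun s _ => psd_vecMulVec (A s))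
        (Qpd hlam hcμ)
    exact le_min zero_le_one (psd_nonneg hVpd.inv.posSemidef (A t))
  set B : ℕ → Finset ℕ := fun j => Finset.Icc (j*τ+1) (j*τ+τ) with hB
  have cover : Finset.Icc 1 T ⊆ (Finset.range n).biUnion B := by
    intro t ht
    rw [Finset.mem_Icc] at ht
    rw [Finset.mem_biUnion]
    refine ⟨(t-1)/τ, ?_, ?_⟩
    · rw [Finset.mem_range, hn, Nat.lt_ceil]
      have h1 : τ * ((t-1)/τ) + (t-1) % τ = t - 1 := Nat.div_add_mod _ _
      have h2 : (t-1)/τ * τ < T := by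
        rw [mul_comm]
        omega
      have h3 : (((t-1)/τ : ℕ) : ℝ) * (τ:ℝ) < (T:ℝ) := by exact_mod_cast h2
      rw [lt_div_iff₀ hτ']
      exact h3
    · rw [hB, Finset.mem_Icc]
      have h1 : τ * ((t-1)/τ) + (t-1) % τ = t - 1 := Nat.div_add_mod _ _
      have h4 : (t-1) % τ < τ := Nat.mod_lt _ (by omega)
      rw [mul_comm]
      omega
  have hdisj : Set.PairwiseDisjoint ↑(Finset.range n) B := by
    intro i _ j _ hij
    have key : ∀ i j : ℕ, i < j → Disjoint (B i) (B j) := by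
      intro i j h
      rw [Finset.disjoint_left]
      intro a hai haj
      rw [hB, Finset.mem_Icc] at hai haj
      have h2 : i*τ + τ ≤ j*τ := by
        have := Nat.mul_le_mul_right τ (Nat.succ_le_of_lt h)
        simpa [Nat.succ_mul] using this
      have : a ≤ j * τ := le_trans hai.2 h2
      omega
    rcases Nat.lt_or_ge i j with h | h
    · exact key i j h
    · exact (key j i (by omega)).symm
  have hblock : ∀ j, ∑ t ∈ B j, f t ≤ 2 * d * Real.log (1 + cμ * L ^ 2 * τ / (lam * d)) := by
    intro j
    have : B j = Finset.Ico (j*τ+1) (j*τ+τ+1) := by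
      rw [hB, Finset.Ico_add_one_right_eq_Icc]
    rw [this, Finset.sum_Ico_eq_sum_range]
    have hlen : j*τ+τ+1 - (j*τ+1) = τ := by omega
    rw [hlen]
    exact block_bound d τ hd hτ A lam cμ L hlam hcμ hL hA V hV (j*τ+1) (by omega)
  calc ∑ t ∈ Finset.Icc 1 T, f t
      ≤ ∑ t ∈ (Finset.range n).biUnion B, f t :=
        Finset.sum_le_sum_of_subset_of_nonneg cover (fun t _ _ => hnn t)
    _ = ∑ j ∈ Finset.range n, ∑ t ∈ B j, f t := Finset.sum_biUnion hdisj
    _ ≤ ∑ j ∈ Finset.range n, 2 * d * Real.log (1 + cμ * L ^ 2 * τ / (lam * d)) :=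
        Finset.sum_le_sum fun j _ => hblock j
    _ = 2 * d * (n:ℝ) * Real.log (1 + cμ * L ^ 2 * τ / (lam * d)) := by
        rw [Finset.sum_const, Finset.card_range, nsmul_eq_mul]
        ring
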